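/- Let A_ρ ⊆ M_n be a structural matrix algebra. Every matrix A ∈ A_ρ whose support is contained in a single row (i.e., there is j such that A_{ik} = 0 whenever i ≠ j) or in a single column belongs to the closure of ℛ in M_n. -/

import Mathlib

open Matrix

lemma aux_rank {n : ℕ} (w v : Fin n → ℂ) (hw : w ≠ 0) (hv : v ≠ 0) :
    (vecMulVec w v).rank = 1 := by
  have hrange : LinearMap.range (vecMulVec w v).mulVecLin = ℂ ∙ w := by
    apply le_antisymm
    · rintro _ ⟨x, rfl⟩
      rw [Submodule.mem_span_singleton]
      refine ⟨v ⬝ᵥ x, ?_⟩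
      ext i
      simp [mulVec, vecMulVec, dotProduct, Finset.sum_mul, Finset.mul_sum,
        mul_comm, mul_assoc, mul_left_comm]
    · rw [Submodule.span_singleton_le_iff_mem]
      obtain ⟨j, hj⟩ := Function.ne_iff.mp hv
      refine ⟨Pi.single j (v j)⁻¹, ?_⟩
      ext i
      simp [mulVec, vecMulVec, dotProduct, Pi.single_apply, mul_assoc,
        mul_inv_cancel₀ hj]
  rw [Matrix.rank, hrange, finrank_span_singleton hw]

lemma aux_nilp {n : ℕ} (w v : Fin n → ℂ) (h : v ⬝ᵥ w ≠ 0)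
    (hne : vecMulVec w v ≠ 0) : ¬ IsNilpotent (vecMulVec w v) := by
  set Y := vecMulVec w v with hY
  have hsq : Y * Y = (v ⬝ᵥ w) • Y := by
    ext i k
    simp only [hY, mul_apply, vecMulVec_apply, Matrix.smul_apply, smul_eq_mul, dotProduct,
      Finset.sum_mul]
    exact Finset.sum_congr rfl fun x _ => by ring
  have hpow : ∀ m : ℕ, Y ^ (m + 1) = (v ⬝ᵥ w) ^ m • Y := by
    intro m
    induction m with
    | zero => simp
    | succ m ih =>
        rw [pow_succ, ih, smul_mul_assoc, hsq, smul_smul, pow_succ]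
  rintro ⟨k, hk⟩
  cases k with
  | zero =>
      have : ∃ i k, Y i k ≠ 0 := by
        by_contra hc
        push_neg at hc
        exact hne (by ext i k; simpa using hc i k)
      obtain ⟨i, k, hik⟩ := this
      have : (1 : Matrix (Fin n) (Fin n) ℂ) i i = 0 := by rw [← pow_zero Y, hk]; rfl
      simp at this
  | succ m =>
      rw [hpow] at hk
      have := smul_eq_zero.mp hk
      rcases this with h1 | h2
      · exact h (pow_eq_zero_iff'.mp h1).1
      · exact hne h2

lemma aux_eps (z : ℂ) :
    ∃ ε : ℕ → ℂ, Filter.Tendsto ε Filter.atTop (nhds 0) ∧ ∀ m, z + ε m ≠ 0 := by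
  set s : ℝ := if 0 ≤ z.im then 1 else -1 with hs
  refine ⟨fun m => ((s / (m + 1) : ℝ) : ℂ) * Complex.I, ?_, ?_⟩
  · have h1 : Filter.Tendsto (fun m : ℕ => (s / (m + 1) : ℝ)) Filter.atTop (nhds 0) := by
      have := tendsto_one_div_add_atTop_nhds_zero_nat.const_mul s
      simpa [div_eq_mul_inv, mul_comm, mul_assoc] using this
    have h2 : Filter.Tendsto (fun m : ℕ => ((s / (m + 1) : ℝ) : ℂ)) Filter.atTop
        (nhds ((0:ℝ):ℂ)) := (Complex.continuous_ofReal.tendsto 0).comp h1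
    simpa using h2.mul_const Complex.I
  · intro m hc
    have him := congrArg Complex.im hc
    have hpos : (0 : ℝ) < 1 / (m + 1 : ℝ) := by positivity
    simp only [Complex.add_im, Complex.mul_im, Complex.ofReal_re, Complex.ofReal_im,
      Complex.I_im, Complex.I_re, mul_one, mul_zero, zero_mul, add_zero, zero_add,
      Complex.zero_im] at him
    by_cases h0 : 0 ≤ z.im
    · rw [hs] at him; rw [if_pos h0] at him
      rw [div_eq_mul_inv] at him hpos
      nlinarith [him]
    · rw [hs] at him; rw [if_neg h0] at him
      push_neg at h0
      rw [div_eq_mul_inv] at him hpos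
      nlinarith [him]

theorem stmt_8 (n : ℕ) (ρ : Fin n → Fin n → Prop)
    (hrefl : ∀ i, ρ i i) (htrans : ∀ i j k, ρ i j → ρ j k → ρ i k)
    (A : Set (Matrix (Fin n) (Fin n) ℂ))
    (hA : A = {X : Matrix (Fin n) (Fin n) ℂ | ∀ i j, ¬ ρ i j → X i j = 0})
    (R : Set (Matrix (Fin n) (Fin n) ℂ))
    (hR : R = {X : Matrix (Fin n) (Fin n) ℂ | X ∈ A ∧ X.rank = 1 ∧ ¬ IsNilpotent X})
    (X : Matrix (Fin n) (Fin n) ℂ) (hX : X ∈ A)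
    (hrow : (∃ j : Fin n, ∀ i k, i ≠ j → X i k = 0) ∨
            (∃ j : Fin n, ∀ i k, k ≠ j → X i k = 0)) :
    X ∈ closure R := by
  rw [hA] at hX
  rcases hrow with ⟨j, hj⟩ | ⟨j, hj⟩
  · obtain ⟨ε, hεlim, hεne⟩ := aux_eps (X j j)
    set E : Matrix (Fin n) (Fin n) ℂ := Matrix.single j j 1 with hE
    set Y : ℕ → Matrix (Fin n) (Fin n) ℂ := fun m => X + ε m • E with hYdef
    set v : ℕ → Fin n → ℂ := fun m k => X j k + if k = j then ε m else 0 with hv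
    have hvm : ∀ m, Y m = vecMulVec (Pi.single j 1) (v m) := by
      intro m; ext i k
      simp only [hYdef, hE, hv, vecMulVec_apply, Matrix.add_apply, Matrix.smul_apply,
        Matrix.single, of_apply, smul_eq_mul, Pi.single_apply]
      rcases eq_or_ne i j with hi | hi
      · rw [hi]
        rcases eq_or_ne k j with hk | hk
        · rw [hk]; simp
        · rw [if_pos rfl, one_mul, if_neg hk,
            if_neg (fun h : j = j ∧ j = k => hk h.2.symm)]
          ring
      · rw [if_neg hi, zero_mul, if_neg (fun h : j = i ∧ j = k => hi h.1.symm),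
          hj i k hi]
        ring
    have hvj : ∀ m, v m j = X j j + ε m := by intro m; simp [hv]
    have hmem : ∀ m, Y m ∈ R := by
      intro m
      rw [hR]
      refine ⟨?_, ?_, ?_⟩
      · rw [hA]
        intro i k hρ
        have hE0 : E i k = 0 := by
          simp only [hE, Matrix.single, of_apply]
          rw [if_neg]
          rintro ⟨rfl, rfl⟩; exact hρ (hrefl _)
        simp [hYdef, hE0, hX i k hρ]
      · rw [hvm m]
        apply aux_rank
        · intro h
          have h1 := congrFun h j
          rw [Pi.single_eq_same] at h1
          exact one_ne_zero h1
        · intro h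
          apply hεne m
          rw [← hvj m]
          simpa using congrFun h j
      · rw [hvm m]
        apply aux_nilp
        · have hd : v m ⬝ᵥ Pi.single j 1 = v m j := by
            simp [dotProduct, Pi.single_apply]
          rw [hd, hvj]
          exact hεne m
        · intro h0
          have := congrFun (congrFun h0 j) j
          simp [vecMulVec_apply, hvj] at this
          exact hεne m this
    have hlim : Filter.Tendsto Y Filter.atTop (nhds X) := by
      have := (hεlim.smul_const E).const_add X
      simpa using this
    exact mem_closure_of_tendsto hlim (Filter.Eventually.of_forall hmem)
  · obtain ⟨ε, hεlim, hεne⟩ := aux_eps (X j j)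
    set E : Matrix (Fin n) (Fin n) ℂ := Matrix.single j j 1 with hE
    set Y : ℕ → Matrix (Fin n) (Fin n) ℂ := fun m => X + ε m • E with hYdef
    set w : ℕ → Fin n → ℂ := fun m i => X i j + if i = j then ε m else 0 with hw
    have hvm : ∀ m, Y m = vecMulVec (w m) (Pi.single j 1) := by
      intro m; ext i k
      simp only [hYdef, hE, hw, vecMulVec_apply, Matrix.add_apply, Matrix.smul_apply,
        Matrix.single, of_apply, smul_eq_mul, Pi.single_apply]
      rcases eq_or_ne k j with hk | hk
      · rw [hk]
        rcases eq_or_ne i j with hi | hi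
        · rw [hi]; simp
        · rw [if_pos rfl, mul_one, if_neg hi,
            if_neg (fun h : j = i ∧ j = j => hi h.1.symm)]
          ring
      · rw [if_neg hk, mul_zero, if_neg (fun h : j = i ∧ j = k => hk h.2.symm),
          hj i k hk]
        ring
    have hwj : ∀ m, w m j = X j j + ε m := by intro m; simp [hw]
    have hmem : ∀ m, Y m ∈ R := by
      intro m
      rw [hR]
      refine ⟨?_, ?_, ?_⟩
      · rw [hA]
        intro i k hρ
        have hE0 : E i k = 0 := by
          simp only [hE, Matrix.single, of_apply]
          rw [if_neg]
          rintro ⟨rfl, rfl⟩; exact hρ (hrefl _)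
        simp [hYdef, hE0, hX i k hρ]
      · rw [hvm m]
        apply aux_rank
        · intro h
          apply hεne m
          rw [← hwj m]
          simpa using congrFun h j
        · intro h
          have h1 := congrFun h j
          rw [Pi.single_eq_same] at h1
          exact one_ne_zero h1
      · rw [hvm m]
        apply aux_nilp
        · have hd : Pi.single j 1 ⬝ᵥ w m = w m j := by
            simp [dotProduct, Pi.single_apply]
          rw [hd, hwj]
          exact hεne m
        · intro h0
          have := congrFun (congrFun h0 j) j
          simp [vecMulVec_apply, hwj] at this
          exact hεne m this
    have hlim : Filter.Tendsto Y Filter.atTop (nhds X) := by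
      have := (hεlim.smul_const E).const_add X
      simpa using this
    exact mem_closure_of_tendsto hlim (Filter.Eventually.of_forall hmem)
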